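/- arXiv:1009.3622 — 2 statements merged into one kernel-verified Lean document; each statement's English description precedes it below -/
import Mathlib

section
/- If L̃ is a space of the affine arrangement A_X (i.e. a nonempty intersection of a subset of the hyperplanes χ^{-1}(k), χ ∈ X, k ∈ ℤ), then π(L̃) is a layer of the toric arrangement T_X: there exists a subset X' ⊆ X such that π(L̃) is a connected component of the intersection ⋂_{χ ∈ X'} H_χ. -/
noncomputable section

/-- `V n` is the real vector space `ℝⁿ`. -/
abbrev Vn (n : ℕ) := EuclideanSpace ℝ (Fin n)

/-- The lattice `Λ ⊆ V` spanned over `ℤ` by an `ℝ`-basis `b`. -/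
def LamZ (n : ℕ) (b : Module.Basis (Fin n) ℝ (Vn n)) : AddSubgroup (Vn n) :=
  (Submodule.span ℤ (Set.range (b : Fin n → Vn n))).toAddSubgroup

/-- The torus `T = V/Λ`. -/
abbrev Torus (n : ℕ) (b : Module.Basis (Fin n) ℝ (Vn n)) := Vn n ⧸ LamZ n b

/-- The quotient map `π : V → T`. -/
def pr (n : ℕ) (b : Module.Basis (Fin n) ℝ (Vn n)) : Vn n → Torus n b :=
  QuotientAddGroup.mk

/-- The complement `M` of the affine arrangement `A_X`. -/
def Mcomp (n : ℕ) (X : Finset (Vn n →ₗ[ℝ] ℝ)) : Set (Vn n) :=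
  {v | ∀ χ ∈ X, ∀ k : ℤ, χ v ≠ (k : ℝ)}

/-- A chamber of the affine arrangement: a connected component of `M`. -/
def IsAffChamber (n : ℕ) (X : Finset (Vn n →ₗ[ℝ] ℝ)) (C : Set (Vn n)) : Prop :=
  ∃ v ∈ Mcomp n X, C = connectedComponentIn (Mcomp n X) v

/-- A space of the affine arrangement: a nonempty intersection of a (possibly empty)
set of hyperplanes `χ⁻¹(k)`, `χ ∈ X`, `k ∈ ℤ`. -/
def IsAffSpace (n : ℕ) (X : Finset (Vn n →ₗ[ℝ] ℝ)) (L : Set (Vn n)) : Prop :=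
  L.Nonempty ∧ ∃ P : Set ((Vn n →ₗ[ℝ] ℝ) × ℤ), (∀ p ∈ P, p.1 ∈ X) ∧
    L = ⋂ p ∈ P, {v : Vn n | p.1 v = (p.2 : ℝ)}

/-- A facet of the affine arrangement: a nonempty intersection of a space with the
closure of a chamber. -/
def IsAffFacet (n : ℕ) (X : Finset (Vn n →ₗ[ℝ] ℝ)) (F : Set (Vn n)) : Prop :=
  F.Nonempty ∧ ∃ L C, IsAffSpace n X L ∧ IsAffChamber n X C ∧ F = L ∩ closure C

/-- The hypersurface `H_χ = π(χ⁻¹(ℤ))` of the toric arrangement. -/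
def torHyp (n : ℕ) (b : Module.Basis (Fin n) ℝ (Vn n)) (χ : Vn n →ₗ[ℝ] ℝ) :
    Set (Torus n b) :=
  pr n b '' {v | ∃ k : ℤ, χ v = (k : ℝ)}

/-- The complement `R = π(M)` of the toric arrangement. -/
def Rcomp (n : ℕ) (b : Module.Basis (Fin n) ℝ (Vn n)) (X : Finset (Vn n →ₗ[ℝ] ℝ)) :
    Set (Torus n b) :=
  pr n b '' Mcomp n X

/-- A chamber of the toric arrangement: a connected component of `R`. -/
def IsTorChamber (n : ℕ) (b : Module.Basis (Fin n) ℝ (Vn n)) (X : Finset (Vn n →ₗ[ℝ] ℝ))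
    (C : Set (Torus n b)) : Prop :=
  ∃ t ∈ Rcomp n b X, C = connectedComponentIn (Rcomp n b X) t

/-- A layer of the toric arrangement: a connected component of an intersection of a
(possibly empty) subset of the hypersurfaces `H_χ`. -/
def IsTorLayer (n : ℕ) (b : Module.Basis (Fin n) ℝ (Vn n)) (X : Finset (Vn n →ₗ[ℝ] ℝ))
    (L : Set (Torus n b)) : Prop :=
  ∃ X' ⊆ X, ∃ t ∈ ⋂ χ ∈ X', torHyp n b χ,
    L = connectedComponentIn (⋂ χ ∈ X', torHyp n b χ) t

/-- A facet of the toric arrangement: a nonempty intersection of a layer with the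
closure of a chamber. -/
def IsTorFacet (n : ℕ) (b : Module.Basis (Fin n) ℝ (Vn n)) (X : Finset (Vn n →ₗ[ℝ] ℝ))
    (F : Set (Torus n b)) : Prop :=
  F.Nonempty ∧ ∃ L C, IsTorLayer n b X L ∧ IsTorChamber n b X C ∧ F = L ∩ closure C

/-- The toric arrangement is *thick* if `π` is injective on the closure of every
chamber of the affine arrangement. -/
def IsThick (n : ℕ) (b : Module.Basis (Fin n) ℝ (Vn n)) (X : Finset (Vn n →ₗ[ℝ] ℝ)) : Prop :=
  ∀ C : Set (Vn n), IsAffChamber n X C → Set.InjOn (pr n b) (closure C)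

/-- Auxiliary: a preconnected set which is relatively clopen in `Y` (witnessed by
ambient open sets) is the connected component in `Y` of any of its points. -/
lemma aux_comp_eq {α : Type*} [TopologicalSpace α] {Y S W₁ W₂ : Set α} {t : α}
    (ht : t ∈ S) (hSY : S ⊆ Y) (hS : IsPreconnected S)
    (hW₁ : IsOpen W₁) (hW₂ : IsOpen W₂)
    (h1 : W₁ ∩ Y = S) (h2 : W₂ ∩ Y = Y \ S) :
    S = connectedComponentIn Y t := by
  refine subset_antisymm (hS.subset_connectedComponentIn ht hSY) ?_
  intro x hx
  by_contra hxS
  have hKY := connectedComponentIn_subset Y t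
  have hK : IsPreconnected (connectedComponentIn Y t) := isPreconnected_connectedComponentIn
  have hsub : connectedComponentIn Y t ⊆ W₁ ∪ W₂ := by
    intro y hy
    by_cases h : y ∈ S
    · exact Or.inl (by rw [← h1] at h; exact h.1)
    · have : y ∈ Y \ S := ⟨hKY hy, h⟩
      rw [← h2] at this
      exact Or.inr this.1
  have htW : t ∈ W₁ ∩ Y := by rw [h1]; exact ht
  have hxW : x ∈ W₂ ∩ Y := by rw [h2]; exact ⟨hKY hx, hxS⟩
  obtain ⟨z, hzK, hz1, hz2⟩ :=
    hK W₁ W₂ hW₁ hW₂ hsub ⟨t, mem_connectedComponentIn (hSY ht), htW.1⟩ ⟨x, hx, hxW.1⟩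
  have hzY : z ∈ Y := hKY hzK
  have hzS : z ∈ S := by rw [← h1]; exact ⟨hz1, hzY⟩
  have hzS' : z ∈ Y \ S := by rw [← h2]; exact ⟨hz2, hzY⟩
  exact hzS'.2 hzS

/-- the image under `π` of a space of the affine arrangement `A_X`
is a layer of the toric arrangement `T_X`. -/
theorem stmt_3 (n : ℕ) (b : Module.Basis (Fin n) ℝ (Vn n)) (X : Finset (Vn n →ₗ[ℝ] ℝ))
    (hX0 : ∀ χ ∈ X, χ ≠ 0)
    (hXint : ∀ χ ∈ X, ∀ v ∈ LamZ n b, ∃ k : ℤ, χ v = (k : ℝ))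
    (L : Set (Vn n)) (hL : IsAffSpace n X L) :
    IsTorLayer n b X (pr n b '' L) := by
  classical
  obtain ⟨⟨v₀, hv₀⟩, P, hPX, hPL⟩ := hL
  set X' : Finset (Vn n →ₗ[ℝ] ℝ) := X.filter (fun χ => ∃ k : ℤ, (χ, k) ∈ P) with hX'def
  set Y : Set (Torus n b) := ⋂ χ ∈ X', torHyp n b χ with hYdef
  have hsurj : Function.Surjective (pr n b) := QuotientAddGroup.mk_surjective
  have hprEq : ∀ x y : Vn n, pr n b x = pr n b y ↔ x - y ∈ LamZ n b := fun x y =>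
    QuotientAddGroup.eq_iff_sub_mem
  have hmemL : ∀ v, v ∈ L ↔ ∀ p ∈ P, p.1 v = (p.2 : ℝ) := by
    intro v; rw [hPL]; simp [Set.mem_iInter]
  have hX'X : ∀ χ ∈ X', χ ∈ X := fun χ hχ => (Finset.mem_filter.mp hχ).1
  have hLint : ∀ v ∈ L, ∀ χ ∈ X', ∃ k : ℤ, χ v = (k : ℝ) := by
    intro v hv χ hχ
    obtain ⟨k, hk⟩ := (Finset.mem_filter.mp hχ).2
    exact ⟨k, (hmemL v).mp hv (χ, k) hk⟩
  -- the saturated set A = π⁻¹(π(L))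
  set A : Set (Vn n) := pr n b ⁻¹' (pr n b '' L) with hAdef
  have hA_mem : ∀ v, v ∈ A ↔ ∃ u ∈ L, u - v ∈ LamZ n b := by
    intro v
    constructor
    · rintro ⟨u, hu, hpu⟩
      exact ⟨u, hu, (hprEq u v).mp hpu⟩
    · rintro ⟨u, hu, huv⟩
      exact ⟨u, hu, (hprEq u v).mpr huv⟩
  have hLA : L ⊆ A := Set.subset_preimage_image _ _
  have hAsat : ∀ v ∈ A, ∀ w : Vn n, w - v ∈ LamZ n b → w ∈ A := by
    intro v hv w hwv
    obtain ⟨u, hu, huv⟩ := (hA_mem v).mp hv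
    refine (hA_mem w).mpr ⟨u, hu, ?_⟩
    have : u - w = (u - v) - (w - v) := by abel
    rw [this]
    exact sub_mem huv hwv
  -- the key rigidity lemma
  have hkey : ∀ v ∈ A, ∀ w : Vn n, (∀ χ ∈ X', χ w = χ v) → w ∈ A := by
    intro v hv w hw
    obtain ⟨u, hu, huv⟩ := (hA_mem v).mp hv
    refine (hA_mem w).mpr ⟨w - v + u, ?_, ?_⟩
    · rw [hmemL]
      intro p hp
      have hpX' : p.1 ∈ X' := Finset.mem_filter.mpr ⟨hPX p hp, ⟨p.2, by simpa using hp⟩⟩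
      have h1 : p.1 (w - v + u) = p.1 w - p.1 v + p.1 u := by
        rw [map_add, map_sub]
      rw [h1, hw p.1 hpX', sub_self, zero_add]
      exact (hmemL u).mp hu p hp
    · have : (w - v + u) - w = u - v := by abel
      rw [this]
      exact huv
  -- Z = π⁻¹(Y)
  set Z : Set (Vn n) := {v | ∀ χ ∈ X', ∃ k : ℤ, χ v = (k : ℝ)} with hZdef
  have hZsat : ∀ v ∈ Z, ∀ w : Vn n, w - v ∈ LamZ n b → w ∈ Z := by
    intro v hv w hwv χ hχ
    obtain ⟨k, hk⟩ := hv χ hχ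
    obtain ⟨m, hm⟩ := hXint χ (hX'X χ hχ) _ hwv
    rw [map_sub] at hm
    exact ⟨m + k, by push_cast; linarith⟩
  have hAZ : A ⊆ Z := by
    intro v hv
    obtain ⟨u, hu, huv⟩ := (hA_mem v).mp hv
    have huZ : u ∈ Z := fun χ hχ => hLint u hu χ hχ
    have : v - u ∈ LamZ n b := by
      have h : v - u = -(u - v) := by abel
      rw [h]; exact neg_mem huv
    exact hZsat u huZ v this
  have hZY : pr n b ⁻¹' Y = Z := by
    ext v
    simp only [hYdef, Set.mem_preimage, Set.mem_iInter, hZdef, Set.mem_setOf_eq, torHyp,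
      Set.mem_image]
    constructor
    · intro h χ hχ
      obtain ⟨u, ⟨k, hk⟩, hpu⟩ := h χ hχ
      obtain ⟨m, hm⟩ := hXint χ (hX'X χ hχ) _ ((hprEq u v).mp hpu)
      rw [map_sub] at hm
      exact ⟨k - m, by push_cast; linarith⟩
    · intro h χ hχ
      exact ⟨v, h χ hχ, rfl⟩
  -- the basic neighborhoods
  set N : Vn n → Set (Vn n) := fun v => ⋂ χ ∈ X', {w : Vn n | |χ w - χ v| < 1} with hNdef
  have hNopen : ∀ v, IsOpen (N v) := by
    intro v
    refine isOpen_biInter_finset fun χ _ => ?_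
    exact isOpen_lt ((χ.continuous_of_finiteDimensional.sub continuous_const).abs)
      continuous_const
  have hNmem : ∀ v w, w ∈ N v ↔ ∀ χ ∈ X', |χ w - χ v| < 1 := by
    intro v w; simp [hNdef, Set.mem_iInter]
  have hNself : ∀ v, v ∈ N v := by
    intro v
    rw [hNmem]
    intro χ _
    simp
  have hNeq : ∀ v ∈ Z, ∀ w ∈ Z, w ∈ N v → ∀ χ ∈ X', χ w = χ v := by
    intro v hv w hw hN χ hχ
    obtain ⟨k, hk⟩ := hv χ hχ
    obtain ⟨m, hm⟩ := hw χ hχ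
    have h1 : |(m : ℝ) - k| < 1 := by rw [← hk, ← hm]; exact (hNmem v w).mp hN χ hχ
    have h2 : |m - k| < 1 := by exact_mod_cast (by push_cast; exact h1 : |((m - k : ℤ) : ℝ)| < 1)
    have : m = k := by rw [abs_lt] at h2; omega
    rw [hm, hk, this]
  have hNtrans : ∀ v w u : Vn n, w ∈ N v → w + u ∈ N (v + u) := by
    intro v w u hw
    rw [hNmem] at hw ⊢
    intro χ hχ
    have : χ (w + u) - χ (v + u) = χ w - χ v := by rw [map_add, map_add]; ring
    rw [this]
    exact hw χ hχ
  -- the saturated open sets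
  have hUgen : ∀ S : Set (Vn n), (∀ s ∈ S, ∀ w : Vn n, w - s ∈ LamZ n b → w ∈ S) →
      ∀ u ∈ ⋃ v ∈ S, N v, ∀ w : Vn n, w - u ∈ LamZ n b → w ∈ ⋃ v ∈ S, N v := by
    intro S hSsat u hu w hwu
    simp only [Set.mem_iUnion] at hu ⊢
    obtain ⟨v, hv, huN⟩ := hu
    refine ⟨v + (w - u), hSsat v hv _ (by simpa using hwu), ?_⟩
    have h2 := hNtrans v u (w - u) huN
    rwa [show u + (w - u) = w by abel] at h2
  set U : Set (Vn n) := ⋃ v ∈ A, N v with hUdef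
  set U' : Set (Vn n) := ⋃ v ∈ Z \ A, N v with hU'def
  have hUopen : IsOpen U := isOpen_biUnion fun v _ => hNopen v
  have hU'open : IsOpen U' := isOpen_biUnion fun v _ => hNopen v
  have hUZ : U ∩ Z = A := by
    apply subset_antisymm
    · rintro w ⟨hwU, hwZ⟩
      simp only [hUdef, Set.mem_iUnion] at hwU
      obtain ⟨v, hvA, hwN⟩ := hwU
      exact hkey v hvA w (hNeq v (hAZ hvA) w hwZ hwN)
    · intro a ha
      exact ⟨Set.mem_biUnion ha (hNself a), hAZ ha⟩
  have hU'Z : U' ∩ Z = Z \ A := by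
    apply subset_antisymm
    · rintro w ⟨hwU, hwZ⟩
      simp only [hU'def, Set.mem_iUnion] at hwU
      obtain ⟨v, hvZA, hwN⟩ := hwU
      refine ⟨hwZ, fun hwA => hvZA.2 ?_⟩
      have heq := hNeq v hvZA.1 w hwZ hwN
      exact hkey w hwA v (fun χ hχ => (heq χ hχ).symm)
    · intro a ha
      exact ⟨Set.mem_biUnion ha (hNself a), ha.1⟩
  have hUsat : ∀ u ∈ U, ∀ w : Vn n, w - u ∈ LamZ n b → w ∈ U := hUgen A hAsat
  have hU'sat : ∀ u ∈ U', ∀ w : Vn n, w - u ∈ LamZ n b → w ∈ U' := by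
    refine hUgen (Z \ A) ?_
    rintro s ⟨hsZ, hsA⟩ w hws
    refine ⟨hZsat s hsZ w hws, fun hwA => hsA ?_⟩
    have : s - w ∈ LamZ n b := by
      have h : s - w = -(w - s) := by abel
      rw [h]; exact neg_mem hws
    exact hAsat w hwA s this
  have hsatEq : ∀ S : Set (Vn n), (∀ u ∈ S, ∀ w : Vn n, w - u ∈ LamZ n b → w ∈ S) →
      pr n b ⁻¹' (pr n b '' S) = S := by
    intro S hSsat
    apply subset_antisymm
    · rintro w ⟨u, hu, hpu⟩
      have h3 : u - w ∈ LamZ n b := (hprEq u w).mp hpu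
      refine hSsat u hu w ?_
      rw [show w - u = -(u - w) by abel]
      exact neg_mem h3
    · exact Set.subset_preimage_image _ _
  -- image of L is preconnected
  have hLconv : Convex ℝ L := by
    rw [hPL]
    refine convex_iInter fun p => convex_iInter fun hp => ?_
    intro x hx y hy a c ha hc hac
    simp only [Set.mem_setOf_eq] at hx hy ⊢
    have h1 : p.1 (a • x + c • y) = a * p.1 x + c * p.1 y := by
      rw [map_add, map_smul, map_smul]; rfl
    rw [h1, hx, hy, ← add_mul, hac, one_mul]
  have hπLconn : IsPreconnected (pr n b '' L) :=
    hLconv.isPreconnected.image _ (QuotientAddGroup.continuous_mk.continuousOn)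
  have hπLY : pr n b '' L ⊆ Y := by
    rintro _ ⟨u, hu, rfl⟩
    rw [hYdef, Set.mem_iInter₂]
    intro χ hχ
    exact ⟨u, hLint u hu χ hχ, rfl⟩
  -- the ambient open sets in the torus
  set W₁ : Set (Torus n b) := pr n b '' U with hW₁def
  set W₂ : Set (Torus n b) := pr n b '' U' with hW₂def
  have hW₁open : IsOpen W₁ := QuotientAddGroup.isOpenMap_coe U hUopen
  have hW₂open : IsOpen W₂ := QuotientAddGroup.isOpenMap_coe U' hU'open
  have hW₁Y : W₁ ∩ Y = pr n b '' L := by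
    have hpre : pr n b ⁻¹' (W₁ ∩ Y) = pr n b ⁻¹' (pr n b '' L) := by
      rw [Set.preimage_inter, hW₁def, hsatEq U hUsat, hZY, hUZ, hAdef]
    have h1 := congrArg (Set.image (pr n b)) hpre
    rwa [Set.image_preimage_eq _ hsurj, Set.image_preimage_eq _ hsurj] at h1
  have hW₂Y : W₂ ∩ Y = Y \ pr n b '' L := by
    have hpre : pr n b ⁻¹' (W₂ ∩ Y) = pr n b ⁻¹' (Y \ pr n b '' L) := by
      rw [Set.preimage_inter, hW₂def, hsatEq U' hU'sat, Set.preimage_diff, hZY, hU'Z, hAdef]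
    have h1 := congrArg (Set.image (pr n b)) hpre
    rwa [Set.image_preimage_eq _ hsurj, Set.image_preimage_eq _ hsurj] at h1
  -- conclude
  refine ⟨X', Finset.filter_subset _ _, pr n b v₀, hπLY ⟨v₀, hv₀, rfl⟩, ?_⟩
  exact aux_comp_eq ⟨v₀, hv₀, rfl⟩ hπLY hπLconn hW₁open hW₂open hW₁Y hW₂Y

end
end

section
/- Let B = (B_1,…,B_m) be an ordered set partition of {1,…,n+1} into m blocks with 2 ≤ m ≤ n+1, and let B′ be an ordered set partition of {1,…,n+1} into m−1 blocks. Then F(B′) ⊆ F(B) if and only if B′ is cyclically equivalent to an ordered set partition obtained from B by replacing two cyclically consecutive blocks B_i and B_{i+1} (indices taken modulo m, so also the last and the first block) by their union B_i ∪ B_{i+1}. -/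
noncomputable section

/-- The closed subgroup `Γ := ℤ^{n+1} + ℝ·(1,…,1)` of `ℝ^{n+1}`. -/
def gammaAn (n : ℕ) : AddSubgroup (Fin (n + 1) → ℝ) where
  carrier := {x | ∃ (m : Fin (n + 1) → ℤ) (c : ℝ), x = fun i => (m i : ℝ) + c}
  zero_mem' := ⟨0, 0, by funext i; simp⟩
  add_mem' := by
    rintro x y ⟨m, c, rfl⟩ ⟨m', c', rfl⟩
    exact ⟨m + m', c + c', by funext i; show ((m i : ℝ) + c) + ((m' i : ℝ) + c') = (((m + m') i : ℤ) : ℝ) + (c + c'); simp [Pi.add_apply]; ring⟩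
  neg_mem' := by
    rintro x ⟨m, c, rfl⟩
    exact ⟨-m, -c, by funext i; show -((m i : ℝ) + c) = (((-m) i : ℤ) : ℝ) + -c; simp [Pi.neg_apply]; ring⟩

/-- The torus `T = ℝ^{n+1}/Γ`. -/
abbrev TAn (n : ℕ) := (Fin (n + 1) → ℝ) ⧸ gammaAn n

/-- The hypersurface `H_{ij} = π({x : x_i - x_j ∈ ℤ})` of the toric arrangement of
type `Ã_n`. -/
def hypAn (n : ℕ) (i j : Fin (n + 1)) : Set (TAn n) :=
  QuotientAddGroup.mk '' {x : Fin (n + 1) → ℝ | ∃ k : ℤ, x i - x j = (k : ℝ)}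

/-- The complement `R = T ∖ ⋃_{i<j} H_{ij}`. -/
def RAn (n : ℕ) : Set (TAn n) :=
  (⋃ (i : Fin (n + 1)) (j : Fin (n + 1)) (_ : i < j), hypAn n i j)ᶜ

/-- A chamber: a connected component of `R`. -/
def IsChamberAn (n : ℕ) (C : Set (TAn n)) : Prop :=
  ∃ t ∈ RAn n, C = connectedComponentIn (RAn n) t

/-- A layer: a connected component of an intersection of a (possibly empty) subset of
the hypersurfaces `H_{ij}`, `i < j`. -/
def IsLayerAn (n : ℕ) (L : Set (TAn n)) : Prop :=
  ∃ P : Set (Fin (n + 1) × Fin (n + 1)), (∀ p ∈ P, p.1 < p.2) ∧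
    ∃ t ∈ ⋂ p ∈ P, hypAn n p.1 p.2,
      L = connectedComponentIn (⋂ p ∈ P, hypAn n p.1 p.2) t

/-- A facet: a nonempty intersection of a layer with the closure of a chamber. -/
def IsFacetAn (n : ℕ) (F : Set (TAn n)) : Prop :=
  F.Nonempty ∧ ∃ L C, IsLayerAn n L ∧ IsChamberAn n C ∧ F = L ∩ closure C

/-- `CovDimLE X m`: every open cover of `X` admits an open refinement in which every
point lies in at most `m + 1` sets (Lebesgue covering dimension `≤ m`). -/
def CovDimLE (X : Type*) [TopologicalSpace X] (m : ℕ) : Prop :=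
  ∀ U : Set (Set X), (∀ u ∈ U, IsOpen u) → ⋃₀ U = Set.univ →
    ∃ W : Set (Set X), (∀ w ∈ W, IsOpen w) ∧ (∀ w ∈ W, ∃ u ∈ U, w ⊆ u) ∧
      ⋃₀ W = Set.univ ∧
      ∀ x : X, {w ∈ W | x ∈ w}.Finite ∧ {w ∈ W | x ∈ w}.ncard ≤ m + 1

/-- The topological (Lebesgue covering) dimension of `X` equals `k`. -/
def HasTopDim (X : Type*) [TopologicalSpace X] (k : ℕ) : Prop :=
  CovDimLE X k ∧ ∀ m : ℕ, CovDimLE X m → k ≤ m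

/-- An ordered set partition of `{1,…,n+1}` into `k+1` (nonempty, pairwise disjoint,
covering) blocks. -/
def IsOrdPartition (n k : ℕ) (B : Fin (k + 1) → Set (Fin (n + 1))) : Prop :=
  (∀ m, (B m).Nonempty) ∧ (∀ m m', m ≠ m' → Disjoint (B m) (B m')) ∧
    (⋃ m, B m) = Set.univ

/-- Two ordered set partitions are cyclically equivalent if one is a cyclic rotation
of the other. -/
def CyclicEquiv (n k : ℕ) (B B' : Fin (k + 1) → Set (Fin (n + 1))) : Prop :=
  ∃ s : Fin (k + 1), ∀ m : Fin (k + 1), B' m = B (m + s)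

/-- The set `F(B)` associated to an ordered set partition `B = (B_1,…,B_{k+1})`:
the image under `π` of the closure of the set of points `x` with `x_i = c_m` for
`i ∈ B_m`, for some `c_1 < ⋯ < c_{k+1} < c_1 + 1`. -/
def FB (n k : ℕ) (B : Fin (k + 1) → Set (Fin (n + 1))) : Set (TAn n) :=
  QuotientAddGroup.mk '' closure {x : Fin (n + 1) → ℝ |
    ∃ c : Fin (k + 1) → ℝ, StrictMono c ∧ c (Fin.last k) < c 0 + 1 ∧
      ∀ m : Fin (k + 1), ∀ i ∈ B m, x i = c m}

/-- The ordered set partition obtained from `B = (B_1,…,B_{k+2})` by replacing the two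
first blocks `B_1`, `B_2` by their union. -/
def mergeHead (n k : ℕ) (B : Fin (k + 2) → Set (Fin (n + 1))) :
    Fin (k + 1) → Set (Fin (n + 1)) :=
  fun j => if j = 0 then B 0 ∪ B 1 else B j.succ

namespace Stmt14Aux

open Set

/-- The open stratum `S(B)` (the set inside `FB` before closure). -/
def SB (n K : ℕ) (B : Fin (K + 1) → Set (Fin (n + 1))) : Set (Fin (n + 1) → ℝ) :=
  {x : Fin (n + 1) → ℝ |
    ∃ c : Fin (K + 1) → ℝ, StrictMono c ∧ c (Fin.last K) < c 0 + 1 ∧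
      ∀ m : Fin (K + 1), ∀ i ∈ B m, x i = c m}

/-- The closed stratum `T(B)`. -/
def TB (n K : ℕ) (B : Fin (K + 1) → Set (Fin (n + 1))) : Set (Fin (n + 1) → ℝ) :=
  {x : Fin (n + 1) → ℝ |
    ∃ c : Fin (K + 1) → ℝ, Monotone c ∧ c (Fin.last K) ≤ c 0 + 1 ∧
      ∀ m : Fin (K + 1), ∀ i ∈ B m, x i = c m}

lemma FB_def (n K : ℕ) (B : Fin (K + 1) → Set (Fin (n + 1))) :
    FB n K B = QuotientAddGroup.mk '' closure (SB n K B) := rfl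

lemma SB_subset_TB (n K : ℕ) (B : Fin (K + 1) → Set (Fin (n + 1))) :
    SB n K B ⊆ TB n K B := by
  rintro x ⟨c, hc, hw, hx⟩
  exact ⟨c, hc.monotone, le_of_lt hw, hx⟩

lemma exists_block {n K : ℕ} {B : Fin (K + 1) → Set (Fin (n + 1))}
    (hB : IsOrdPartition n K B) (i : Fin (n + 1)) : ∃ m, i ∈ B m := by
  have := hB.2.2 ▸ Set.mem_univ i
  simpa [Set.mem_iUnion] using this

lemma isClosed_TB {n K : ℕ} {B : Fin (K + 1) → Set (Fin (n + 1))}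
    (hB : IsOrdPartition n K B) : IsClosed (TB n K B) := by
  obtain ⟨hne, hdis, hcov⟩ := hB
  choose r hr using hne
  have heq : TB n K B =
      (⋂ m, ⋂ i, ⋂ (_ : i ∈ B m), {x : Fin (n + 1) → ℝ | x i = x (r m)}) ∩
      ((⋂ m, ⋂ m', ⋂ (_ : m ≤ m'), {x : Fin (n + 1) → ℝ | x (r m) ≤ x (r m')}) ∩
        {x : Fin (n + 1) → ℝ | x (r (Fin.last K)) ≤ x (r 0) + 1}) := by
    ext x
    simp only [TB, Set.mem_setOf_eq, Set.mem_inter_iff, Set.mem_iInter]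
    constructor
    · rintro ⟨c, hmono, hwrap, hc⟩
      have hv : ∀ m, x (r m) = c m := fun m => hc m (r m) (hr m)
      refine ⟨fun m i hi => by rw [hc m i hi, hv], fun m m' h => by rw [hv, hv]; exact hmono h,
        by rw [hv, hv]; exact hwrap⟩
    · rintro ⟨h1, h2, h3⟩
      exact ⟨fun m => x (r m), fun m m' h => h2 m m' h, h3, fun m i hi => h1 m i hi⟩
  rw [heq]
  refine IsClosed.inter ?_ (IsClosed.inter ?_ ?_)
  · exact isClosed_iInter fun m => isClosed_iInter fun i => isClosed_iInter fun _ =>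
      isClosed_eq (continuous_apply i) (continuous_apply (r m))
  · exact isClosed_iInter fun m => isClosed_iInter fun m' => isClosed_iInter fun _ =>
      isClosed_le (continuous_apply (r m)) (continuous_apply (r m'))
  · exact isClosed_le (continuous_apply _) ((continuous_apply _).add continuous_const)

lemma TB_subset_closure {n K : ℕ} {B : Fin (K + 1) → Set (Fin (n + 1))}
    (hB : IsOrdPartition n K B) : TB n K B ⊆ closure (SB n K B) := by
  obtain ⟨hne, hdis, hcov⟩ := hB
  have hcov' : ∀ i, ∃ m, i ∈ B m := exists_block ⟨hne, hdis, hcov⟩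
  choose blk hblk using hcov'
  have blk_eq : ∀ m i, i ∈ B m → blk i = m := fun m i hi => by
    by_contra h
    exact Set.disjoint_left.mp (hdis _ _ h) (hblk i) hi
  rintro x ⟨c, hmono, hwrap, hc⟩
  set cs : Fin (K + 1) → ℝ := fun m => (m.val : ℝ) / (K + 1) with hcs
  have hKpos : (0 : ℝ) < (K : ℝ) + 1 := by positivity
  have hcs_lt : ∀ m m' : Fin (K + 1), m < m' → cs m < cs m' := by
    intro m m' h
    have : (m.val : ℝ) < (m'.val : ℝ) := by exact_mod_cast h
    exact div_lt_div_of_pos_right this hKpos |>.trans_le (le_refl _) |>.trans_le (le_refl _)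
  have hcs_wrap : cs (Fin.last K) < cs 0 + 1 := by
    simp only [hcs, Fin.val_last, Fin.val_zero]
    rw [Nat.cast_zero, zero_div]
    rw [div_lt_iff₀ hKpos]
    push_cast
    linarith
  -- the approximating points
  have hmem : ∀ t : ℝ, 0 < t → t ≤ 1 →
      (fun i => x i + t * (cs (blk i) - x i)) ∈ SB n K B := by
    intro t ht0 ht1
    refine ⟨fun m => c m + t * (cs m - c m), ?_, ?_, ?_⟩
    · intro m m' h
      have h1 : c m ≤ c m' := hmono (le_of_lt h)
      have h2 : cs m < cs m' := hcs_lt m m' h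
      show c m + t * (cs m - c m) < c m' + t * (cs m' - c m')
      nlinarith
    · show c (Fin.last K) + t * (cs (Fin.last K) - c (Fin.last K)) < c 0 + t * (cs 0 - c 0) + 1
      have h1 : c (Fin.last K) ≤ c 0 + 1 := hwrap
      have h2 : cs (Fin.last K) < cs 0 + 1 := hcs_wrap
      nlinarith
    · intro m i hi
      show x i + t * (cs (blk i) - x i) = c m + t * (cs m - c m)
      rw [blk_eq m i hi, hc m i hi]
  have htend : Filter.Tendsto
      (fun j : ℕ => (fun i => x i + (1 / (j + 1 : ℝ)) * (cs (blk i) - x i)))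
      Filter.atTop (nhds x) := by
    rw [tendsto_pi_nhds]
    intro i
    have h0 : Filter.Tendsto (fun j : ℕ => (1 / (j + 1 : ℝ))) Filter.atTop (nhds 0) :=
      tendsto_one_div_add_atTop_nhds_zero_nat
    have := (h0.mul_const (cs (blk i) - x i)).const_add (x i)
    simpa using this
  refine mem_closure_of_tendsto htend (Filter.Eventually.of_forall fun j => ?_)
  exact hmem _ (by positivity) (by
    rw [div_le_one (by positivity)]
    push_cast; linarith)

lemma closure_SB_eq {n K : ℕ} {B : Fin (K + 1) → Set (Fin (n + 1))}
    (hB : IsOrdPartition n K B) : closure (SB n K B) = TB n K B :=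
  le_antisymm (closure_minimal (SB_subset_TB n K B) (isClosed_TB hB)) (TB_subset_closure hB)

lemma mem_FB_iff {n K : ℕ} {B : Fin (K + 1) → Set (Fin (n + 1))}
    (hB : IsOrdPartition n K B) (q : TAn n) :
    q ∈ FB n K B ↔ ∃ x ∈ TB n K B, (QuotientAddGroup.mk x : TAn n) = q := by
  rw [FB_def, closure_SB_eq hB]
  exact Set.mem_image _ _ _

end Stmt14Aux
namespace Stmt14Aux

lemma fin_add_val {N : ℕ} (a b : Fin (N + 1)) :
    (a + b).val = if N + 1 ≤ a.val + b.val then a.val + b.val - (N + 1) else a.val + b.val := by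
  have ha := a.isLt
  have hb := b.isLt
  have h : (a + b).val = (a.val + b.val) % (N + 1) := rfl
  rw [h]
  split_ifs with h2
  · rw [Nat.mod_eq_sub_mod h2, Nat.mod_eq_of_lt (by omega)]
  · exact Nat.mod_eq_of_lt (by omega)

lemma wrap_iff {N : ℕ} (a b : Fin (N + 1)) :
    ((a + b).val < b.val) ↔ (N + 1 ≤ a.val + b.val) := by
  have ha := a.isLt
  have hb := b.isLt
  rw [fin_add_val]
  split_ifs with h <;> omega

lemma rot_partition {n K : ℕ} {B : Fin (K + 1) → Set (Fin (n + 1))}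
    (hB : IsOrdPartition n K B) (s : Fin (K + 1)) :
    IsOrdPartition n K (fun m => B (m + s)) := by
  obtain ⟨hne, hdis, hcov⟩ := hB
  refine ⟨fun m => hne _, fun m m' h => hdis _ _ (fun hc => h (by
    have := congrArg (fun z => z - s) hc
    simpa using this)), ?_⟩
  apply Set.eq_univ_of_forall
  intro i
  obtain ⟨m, hm⟩ := exists_block ⟨hne, hdis, hcov⟩ i
  exact Set.mem_iUnion.mpr ⟨m - s, by simpa [sub_add_cancel] using hm⟩

lemma FB_rot_subset {n K : ℕ} {B : Fin (K + 1) → Set (Fin (n + 1))}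
    (hB : IsOrdPartition n K B) (s : Fin (K + 1)) :
    FB n K B ⊆ FB n K (fun m => B (m + s)) := by
  obtain ⟨hne, hdis, hcov⟩ := hB
  choose blk hblk using exists_block ⟨hne, hdis, hcov⟩
  have blk_eq : ∀ m i, i ∈ B m → blk i = m := fun m i hi => by
    by_contra h
    exact Set.disjoint_left.mp (hdis _ _ h) (hblk i) hi
  set v : Fin (n + 1) → ℝ := fun i => if (blk i).val < s.val then 1 else 0 with hv
  have hvΓ : v ∈ gammaAn n := by
    refine ⟨fun i => if (blk i).val < s.val then 1 else 0, 0, funext fun i => ?_⟩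
    by_cases h : (blk i).val < s.val <;> simp only [hv, h, if_true, if_false] <;> norm_num
  have hmaps : ∀ x ∈ SB n K B, v + x ∈ SB n K (fun m => B (m + s)) := by
    rintro x ⟨c, hc, hwrap, hxc⟩
    refine ⟨fun m => c (m + s) + (if K + 1 ≤ m.val + s.val then 1 else 0), ?_, ?_, ?_⟩
    · intro m m' hlt
      have hltv : m.val < m'.val := hlt
      have hm := fin_add_val m s
      have hm' := fin_add_val m' s
      show c (m + s) + (if K + 1 ≤ m.val + s.val then (1:ℝ) else 0)
          < c (m' + s) + (if K + 1 ≤ m'.val + s.val then (1:ℝ) else 0)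
      have hmlt := m.isLt
      have hmlt' := m'.isLt
      by_cases h1 : K + 1 ≤ m.val + s.val <;> by_cases h2 : K + 1 ≤ m'.val + s.val
      · rw [if_pos h1, if_pos h2]
        have : (m + s) < (m' + s) := by
          rw [Fin.lt_def, hm, hm', if_pos h1, if_pos h2]; omega
        linarith [hc this]
      · omega
      · rw [if_pos h2, if_neg h1]
        have e1 : c (m + s) ≤ c (Fin.last K) := hc.monotone (Fin.le_last _)
        have e2 : c 0 ≤ c (m' + s) := hc.monotone (Fin.zero_le _)
        linarith
      · rw [if_neg h1, if_neg h2]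
        have : (m + s) < (m' + s) := by
          rw [Fin.lt_def, hm, hm', if_neg h1, if_neg h2]; omega
        linarith [hc this]
    · show c (Fin.last K + s) + (if K + 1 ≤ (Fin.last K).val + s.val then (1:ℝ) else 0)
          < c (0 + s) + (if K + 1 ≤ (0 : Fin (K+1)).val + s.val then (1:ℝ) else 0) + 1
      have hsk := s.isLt
      have hc0 : ¬ (K + 1 ≤ (0 : Fin (K+1)).val + s.val) := by
        simp only [Fin.val_zero, Nat.zero_add]; omega
      rw [if_neg hc0]
      by_cases hs0 : s = 0
      · subst hs0
        have hcl : ¬ (K + 1 ≤ (Fin.last K).val + (0 : Fin (K+1)).val) := by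
          simp only [Fin.val_last, Fin.val_zero]; omega
        rw [if_neg hcl]
        simp only [add_zero]
        simpa using hwrap
      · have hspos : 0 < s.val := Fin.pos_of_ne_zero hs0
        have hcl : K + 1 ≤ (Fin.last K).val + s.val := by
          simp only [Fin.val_last]; omega
        rw [if_pos hcl]
        have hlt : (Fin.last K + s) < (0 + s) := by
          rw [Fin.lt_def, fin_add_val, fin_add_val, if_pos hcl, if_neg hc0]
          simp only [Fin.val_last, Fin.val_zero, Nat.zero_add]
          omega
        have := hc hlt
        linarith
    · intro m i hi
      have hbi : blk i = m + s := blk_eq _ i hi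
      have hxi : x i = c (m + s) := hxc (m + s) i hi
      show v i + x i = c (m + s) + (if K + 1 ≤ m.val + s.val then (1:ℝ) else 0)
      simp only [hv]
      rw [hbi, hxi, add_comm]
      congr 1
      rw [if_congr (wrap_iff m s) rfl rfl]
  rintro q ⟨x, hx, rfl⟩
  refine ⟨v + x, ?_, ?_⟩
  · exact map_mem_closure (continuous_const.add continuous_id) hx hmaps
  · have h2 : -(v + x) + x = -v := by abel
    exact (QuotientAddGroup.eq).mpr (h2 ▸ neg_mem hvΓ)

lemma FB_rot {n K : ℕ} {B : Fin (K + 1) → Set (Fin (n + 1))}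
    (hB : IsOrdPartition n K B) (s : Fin (K + 1)) :
    FB n K (fun m => B (m + s)) = FB n K B := by
  refine le_antisymm ?_ (FB_rot_subset hB s)
  have h2 := FB_rot_subset (rot_partition hB s) (-s)
  have he : (fun m => B (m + -s + s)) = B := by
    funext m
    rw [neg_add_cancel_right]
  simpa [he] using h2

end Stmt14Aux
namespace Stmt14Aux

lemma merge_partition {n k : ℕ} {C : Fin (k + 2) → Set (Fin (n + 1))}
    (hC : IsOrdPartition n (k + 1) C) : IsOrdPartition n k (mergeHead n k C) := by
  obtain ⟨hne, hdis, hcov⟩ := hC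
  have hsub : ∀ (j : Fin (k + 1)) (i), i ∈ mergeHead n k C j →
      ∃ m, i ∈ C m ∧ ((j = 0 ∧ (m = 0 ∨ m = 1)) ∨ (j ≠ 0 ∧ m = j.succ)) := by
    intro j i hi
    by_cases hj : j = 0
    · subst hj
      rw [mergeHead, if_pos rfl] at hi
      rcases hi with hi | hi
      · exact ⟨0, hi, Or.inl ⟨rfl, Or.inl rfl⟩⟩
      · exact ⟨1, hi, Or.inl ⟨rfl, Or.inr rfl⟩⟩
    · rw [mergeHead, if_neg hj] at hi
      exact ⟨j.succ, hi, Or.inr ⟨hj, rfl⟩⟩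
  refine ⟨?_, ?_, ?_⟩
  · intro j
    by_cases hj : j = 0
    · subst hj
      obtain ⟨i, hi⟩ := hne 0
      exact ⟨i, by rw [mergeHead, if_pos rfl]; exact Or.inl hi⟩
    · obtain ⟨i, hi⟩ := hne j.succ
      exact ⟨i, by rw [mergeHead, if_neg hj]; exact hi⟩
  · intro j j' hjj'
    rw [Set.disjoint_left]
    intro i hi hi'
    obtain ⟨m, him, hm⟩ := hsub j i hi
    obtain ⟨m', him', hm'⟩ := hsub j' i hi'
    have hmm' : m = m' := by
      by_contra h
      exact Set.disjoint_left.mp (hdis m m' h) him him'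
    subst hmm'
    apply hjj'
    rcases hm with ⟨hj0, hm01⟩ | ⟨hj0, hms⟩ <;> rcases hm' with ⟨hj'0, hm01'⟩ | ⟨hj'0, hms'⟩
    · rw [hj0, hj'0]
    · exfalso
      have h3 : 1 ≤ j'.val := Fin.pos_of_ne_zero hj'0
      rcases hm01 with h | h <;> rw [h] at hms'
      · exact (Fin.succ_ne_zero j') hms'.symm
      · have := Fin.succ_injective _ (Fin.succ_zero_eq_one.trans hms')
        rw [← this] at h3
        simp at h3
    · exfalso
      have h3 : 1 ≤ j.val := Fin.pos_of_ne_zero hj0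
      rcases hm01' with h | h <;> rw [h] at hms
      · exact (Fin.succ_ne_zero j) hms.symm
      · have := Fin.succ_injective _ (Fin.succ_zero_eq_one.trans hms)
        rw [← this] at h3
        simp at h3
    · rw [hms] at hms'
      exact Fin.succ_injective _ hms'
  · apply Set.eq_univ_of_forall
    intro i
    obtain ⟨m, hm⟩ := exists_block ⟨hne, hdis, hcov⟩ i
    rw [Set.mem_iUnion]
    by_cases h01 : m.val ≤ 1
    · refine ⟨0, ?_⟩
      rw [mergeHead, if_pos rfl]
      rcases Nat.le_one_iff_eq_zero_or_eq_one.mp h01 with h | h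
      · exact Or.inl (by rwa [show m = 0 from Fin.ext h] at hm)
      · exact Or.inr (by rwa [show m = 1 from Fin.ext h] at hm)
    · have hmlt := m.isLt
      refine ⟨⟨m.val - 1, by omega⟩, ?_⟩
      have hne0 : (⟨m.val - 1, by omega⟩ : Fin (k + 1)) ≠ 0 := by
        intro h
        have := congrArg Fin.val h
        simp at this
        omega
      rw [mergeHead, if_neg hne0]
      have : (⟨m.val - 1, by omega⟩ : Fin (k + 1)).succ = m := by
        apply Fin.ext
        simp [Fin.val_succ]
        omega
      rwa [this]

lemma FB_merge_subset {n k : ℕ} {C : Fin (k + 2) → Set (Fin (n + 1))}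
    (hC : IsOrdPartition n (k + 1) C) :
    FB n k (mergeHead n k C) ⊆ FB n (k + 1) C := by
  rw [FB_def, FB_def]
  apply Set.image_mono
  have hsub : SB n k (mergeHead n k C) ⊆ TB n (k + 1) C := by
    rintro x ⟨c, hc, hwrap, hx⟩
    refine ⟨fun m => if h : m = 0 then c 0 else c (m.pred h), ?_, ?_, ?_⟩
    · intro m m' hle
      beta_reduce
      by_cases hm : m = 0
      · subst hm
        rw [dif_pos rfl]
        by_cases hm' : m' = 0
        · subst hm'; rw [dif_pos rfl]
        · rw [dif_neg hm']
          exact hc.monotone (Fin.zero_le _)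
      · have hm' : m' ≠ 0 := by
          intro h
          subst h
          exact hm (Fin.le_zero_iff.mp hle)
        rw [dif_neg hm, dif_neg hm']
        apply hc.monotone
        rw [Fin.le_def]
        simp only [Fin.coe_pred]
        have := Fin.le_def.mp hle
        omega
    · beta_reduce
      have hl0 : (Fin.last (k + 1)) ≠ 0 := by
        intro h
        have := congrArg Fin.val h
        simp at this
      rw [dif_pos rfl, dif_neg hl0]
      have hpred : (Fin.last (k + 1)).pred hl0 = Fin.last k := by
        apply Fin.ext
        simp
      rw [hpred]
      exact le_of_lt hwrap
    · intro m i hi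
      beta_reduce
      by_cases hm : m = 0
      · subst hm
        rw [dif_pos rfl]
        exact hx 0 i (by rw [mergeHead, if_pos rfl]; exact Or.inl hi)
      · rw [dif_neg hm]
        by_cases hm1 : m = 1
        · subst hm1
          have : (1 : Fin (k + 2)).pred hm = 0 := by
            apply Fin.ext
            simp
          rw [this]
          exact hx 0 i (by rw [mergeHead, if_pos rfl]; exact Or.inr hi)
        · set j := m.pred hm with hj
          have hj0 : j ≠ 0 := by
            intro h
            apply hm1
            have h1 := congrArg Fin.val h
            simp only [hj, Fin.coe_pred, Fin.val_zero] at h1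
            have h2 := Fin.pos_of_ne_zero hm
            apply Fin.ext
            have h3 : (1 : Fin (k + 2)).val = 1 := Fin.val_one (k + 1)
            omega
          have hjs : j.succ = m := Fin.succ_pred m hm
          exact hx j i (by rw [mergeHead, if_neg hj0, hjs]; exact hi)
  calc closure (SB n k (mergeHead n k C)) ⊆ closure (TB n (k + 1) C) := closure_mono hsub
    _ = TB n (k + 1) C := IsClosed.closure_eq (isClosed_TB hC)
    _ ⊆ closure (SB n (k + 1) C) := TB_subset_closure hC

lemma backward {n k : ℕ} {B : Fin (k + 2) → Set (Fin (n + 1))}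
    {B' : Fin (k + 1) → Set (Fin (n + 1))}
    (hB : IsOrdPartition n (k + 1) B) (s : Fin (k + 2)) (r : Fin (k + 1))
    (hr : ∀ m, B' m = mergeHead n k (fun i => B (i + s)) (m + r)) :
    FB n k B' ⊆ FB n (k + 1) B := by
  have hC : IsOrdPartition n (k + 1) (fun i => B (i + s)) := rot_partition hB s
  have hM : IsOrdPartition n k (mergeHead n k (fun i => B (i + s))) := merge_partition hC
  have hB'eq : B' = fun m => mergeHead n k (fun i => B (i + s)) (m + r) := funext hr
  rw [hB'eq]
  calc FB n k (fun m => mergeHead n k (fun i => B (i + s)) (m + r))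
      = FB n k (mergeHead n k (fun i => B (i + s))) := FB_rot hM r
    _ ⊆ FB n (k + 1) (fun i => B (i + s)) := FB_merge_subset hC
    _ = FB n (k + 1) B := FB_rot hB s

end Stmt14Aux
namespace Stmt14Aux

lemma mul_eq_zero_of_bounded {M : ℕ} {z w : ℤ} (h : z = ((M : ℤ) + 1) * w)
    (h1 : -(M : ℤ) ≤ z) (h2 : z ≤ M) : z = 0 := by
  have hw : w = 0 := by
    rcases lt_trichotomy w 0 with hw | hw | hw
    · have hw1 : w ≤ -1 := by omega
      nlinarith [mul_le_mul_of_nonneg_left hw1 (show (0:ℤ) ≤ (M:ℤ) + 1 by positivity)]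
    · exact hw
    · have hw1 : 1 ≤ w := by omega
      nlinarith [mul_le_mul_of_nonneg_left hw1 (show (0:ℤ) ≤ (M:ℤ) + 1 by positivity)]
  rw [h, hw, mul_zero]

lemma int_eq_bounded {M : ℕ} {x y w : ℤ} (h : x - y = ((M : ℤ) + 1) * w)
    (hx0 : 0 ≤ x) (hxM : x ≤ M) (hy0 : 0 ≤ y) (hyM : y ≤ M) : x = y := by
  have := mul_eq_zero_of_bounded h (by omega) (by omega)
  omega

/-- The combinatorial core: a monotone integer sequence on `Fin (k+2)` starting at
`τ 0`, with total increase at most `k+1`, attaining every intermediate increment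
`1,…,k`, must be `τ 0 + m` up to a single unit drop after position `p`. -/
lemma core {k : ℕ} (τ : Fin (k + 2) → ℤ)
    (hmono : Monotone τ)
    (hwrap : τ (Fin.last (k + 1)) ≤ τ 0 + (k + 1))
    (hval : ∀ v : ℤ, 1 ≤ v → v ≤ k → ∃ m, τ m - τ 0 = v) :
    ∃ p : ℕ, p ≤ k + 1 ∧
      ∀ m : Fin (k + 2), τ m - τ 0 = (m.val : ℤ) - (if p < m.val then 1 else 0) := by
  classical
  have hub' : ∀ m : Fin (k + 2), τ m ≤ τ (Fin.last (k + 1)) :=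
    fun m => hmono (Fin.le_last m)
  have hlb' : ∀ m : Fin (k + 2), τ 0 ≤ τ m := fun m => hmono (Fin.zero_le m)
  -- single step bound
  have hstep1 : ∀ a b : Fin (k + 2), a.val + 1 = b.val → τ b ≤ τ a + 1 := by
    intro a b hab
    by_contra hcon
    push_neg at hcon
    have hga : 0 ≤ τ a - τ 0 := by have := hlb' a; omega
    have hgb : τ b - τ 0 ≤ k + 1 := by have := hub' b; omega
    obtain ⟨m, hm⟩ := hval (τ a - τ 0 + 1) (by omega) (by omega)
    rcases le_or_gt m a with h | h
    · have := hmono h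
      omega
    · have hba : b ≤ m := by
        rw [Fin.le_def]
        have := Fin.lt_def.mp h
        omega
      have := hmono hba
      omega
  -- Lipschitz bound over distance d
  have hlip : ∀ d : ℕ, ∀ a b : Fin (k + 2), a.val + d = b.val → τ b ≤ τ a + d := by
    intro d
    induction d with
    | zero =>
      intro a b hab
      have : a = b := Fin.ext (by omega)
      subst this
      simp
    | succ d ih =>
      intro a b hab
      have hblt := b.isLt
      have hmid : a.val + d < k + 2 := by omega
      set mid : Fin (k + 2) := ⟨a.val + d, hmid⟩ with hmiddef
      have h1 : τ mid ≤ τ a + d := ih a mid rfl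
      have h2 : τ b ≤ τ mid + 1 := hstep1 mid b (by simp [hmiddef]; omega)
      push_cast
      omega
  have hub : ∀ m : Fin (k + 2), τ m - τ 0 ≤ m.val := by
    intro m
    have := hlip m.val 0 m (by simp)
    omega
  have hlbd : ∀ m : Fin (k + 2), τ (Fin.last (k + 1)) - τ m ≤ (k + 1) - m.val := by
    intro m
    have hmlt := m.isLt
    have := hlip (k + 1 - m.val) m (Fin.last (k + 1)) (by simp [Fin.val_last]; omega)
    omega
  have hlast_ub : τ (Fin.last (k + 1)) - τ 0 ≤ k + 1 := by
    have := hub (Fin.last (k + 1)); simp [Fin.val_last] at this; omega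
  have hlast_lb : (k : ℤ) ≤ τ (Fin.last (k + 1)) - τ 0 := by
    rcases Nat.eq_zero_or_pos k with hk | hk
    · subst hk
      have := hlb' 1
      simp
      omega
    · obtain ⟨m, hm⟩ := hval k (by exact_mod_cast hk) le_rfl
      have := hub' m
      omega
  rcases eq_or_lt_of_le hlast_ub with hlast | hlast
  · -- no internal drop: τ m - τ 0 = m.val, take p := k + 1
    refine ⟨k + 1, le_rfl, fun m => ?_⟩
    have hmlt := m.isLt
    rw [if_neg (by omega)]
    have h1 := hub m
    have h2 := hlbd m
    omega
  · -- exactly one internal drop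
    have hlastk : τ (Fin.last (k + 1)) - τ 0 = k := by omega
    set P : ℕ → Prop := fun j => ∃ m : Fin (k + 2), m.val = j ∧ τ m - τ 0 = j with hP
    have hP0 : P 0 := ⟨0, rfl, by simp⟩
    set p := Nat.findGreatest P (k + 1) with hpdef
    have hple : p ≤ k + 1 := Nat.findGreatest_le (k + 1)
    have hPp : P p := Nat.findGreatest_spec (Nat.zero_le _) hP0
    have hmax : ∀ j, p < j → j ≤ k + 1 → ¬ P j := by
      intro j h1 h2
      exact Nat.findGreatest_is_greatest h1 h2
    obtain ⟨m0, hm0v, hm0g⟩ := hPp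
    refine ⟨p, hple, fun m => ?_⟩
    have hmlt := m.isLt
    rcases le_or_gt m.val p with hcase | hcase
    · rw [if_neg (by omega)]
      have h1 := hub m
      have h2 := hlip (p - m.val) m m0 (by omega)
      omega
    · rw [if_pos hcase]
      have h1 := hub m
      have h2 := hlbd m
      have h3 : ¬ P m.val := hmax m.val hcase (by omega)
      have h4 : τ m - τ 0 ≠ m.val := by
        intro hgm
        exact h3 ⟨m, rfl, hgm⟩
      omega

end Stmt14Aux
namespace Stmt14Aux

lemma fin_neg_val {N : ℕ} (x : Fin (N + 1)) :
    (-x).val = if x.val = 0 then 0 else N + 1 - x.val := by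
  have hx := x.isLt
  have h : (-x).val = (N + 1 - x.val) % (N + 1) := rfl
  rw [h]
  split_ifs with h0
  · rw [h0, Nat.sub_zero, Nat.mod_self]
  · exact Nat.mod_eq_of_lt (by omega)

lemma sigma_eq_aux {k : ℕ} (u v : Fin (k + 1)) (w : ℤ)
    (h : (u.val : ℤ) - v.val = ((k : ℤ) + 1) * w) : u = v := by
  have h1 := u.isLt
  have h2 := v.isLt
  have := int_eq_bounded (M := k) h (by omega) (by omega) (by omega) (by omega)
  exact Fin.ext (by omega)

lemma forward {n k : ℕ} {B : Fin (k + 2) → Set (Fin (n + 1))}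
    {B' : Fin (k + 1) → Set (Fin (n + 1))}
    (hB : IsOrdPartition n (k + 1) B) (hB' : IsOrdPartition n k B')
    (hsub : FB n k B' ⊆ FB n (k + 1) B) :
    ∃ s : Fin (k + 2), CyclicEquiv n k B' (mergeHead n k (fun i => B (i + s))) := by
  obtain ⟨hne, hdis, hcov⟩ := hB
  obtain ⟨hne', hdis', hcov'⟩ := hB'
  have hBp : IsOrdPartition n (k + 1) B := ⟨hne, hdis, hcov⟩
  have hB'p : IsOrdPartition n k B' := ⟨hne', hdis', hcov'⟩
  choose blk' hblk' using exists_block hB'p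
  have blk'_eq : ∀ m i, i ∈ B' m → blk' i = m := fun m i hi => by
    by_contra h
    exact Set.disjoint_left.mp (hdis' _ _ h) (hblk' i) hi
  have hKpos : (0 : ℝ) < (k : ℝ) + 1 := by positivity
  set x₀ : Fin (n + 1) → ℝ := fun i => ((blk' i).val : ℝ) / ((k : ℝ) + 1) with hx₀def
  have hx₀S : x₀ ∈ SB n k B' := by
    refine ⟨fun m => (m.val : ℝ) / ((k : ℝ) + 1), ?_, ?_, ?_⟩
    · intro m m' h
      exact div_lt_div_of_pos_right (by exact_mod_cast h) hKpos
    · show ((Fin.last k).val : ℝ) / ((k : ℝ) + 1) < ((0 : Fin (k + 1)).val : ℝ) / ((k : ℝ) + 1) + 1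
      rw [Fin.val_last, Fin.val_zero, Nat.cast_zero, zero_div, zero_add, div_lt_one hKpos]
      linarith
    · intro m i hi
      show ((blk' i).val : ℝ) / ((k : ℝ) + 1) = _
      rw [blk'_eq m i hi]
  have hq : (QuotientAddGroup.mk x₀ : TAn n) ∈ FB n k B' :=
    ⟨x₀, subset_closure hx₀S, rfl⟩
  have hq2 := hsub hq
  rw [mem_FB_iff hBp] at hq2
  obtain ⟨y, ⟨d, hdmono, hdwrap, hyd⟩, hmk⟩ := hq2
  have hyx : y - x₀ ∈ gammaAn n := by
    have h1 := (QuotientAddGroup.eq).mp hmk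
    have h2 := neg_mem h1
    have h3 : -(-y + x₀) = y - x₀ := by abel
    rwa [h3] at h2
  obtain ⟨a, t, hat⟩ := hyx
  have hy : ∀ i, y i = x₀ i + (a i : ℝ) + t := by
    intro i
    have h1 := congrFun hat i
    simp only [Pi.sub_apply] at h1
    linarith [h1]
  choose rb hrb using hne
  -- constancy of the B'-block index and of `a` on blocks of B
  have hconst : ∀ m : Fin (k + 2), ∀ i ∈ B m, blk' i = blk' (rb m) ∧ a i = a (rb m) := by
    intro m i hi
    have e1 : y i = d m := hyd m i hi
    have e2 : y (rb m) = d m := hyd m (rb m) (hrb m)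
    have e3 : x₀ i + (a i : ℝ) = x₀ (rb m) + (a (rb m) : ℝ) := by
      have h1 := hy i
      have h2 := hy (rb m)
      linarith
    have e4 : ((blk' i).val : ℝ) + ((k : ℝ) + 1) * (a i : ℝ)
        = ((blk' (rb m)).val : ℝ) + ((k : ℝ) + 1) * (a (rb m) : ℝ) := by
      simp only [hx₀def] at e3
      field_simp at e3
      linarith
    have e5 : ((blk' i).val : ℤ) + ((k : ℤ) + 1) * a i
        = ((blk' (rb m)).val : ℤ) + ((k : ℤ) + 1) * a (rb m) := by exact_mod_cast e4
    have e6 : ((blk' i).val : ℤ) - ((blk' (rb m)).val : ℤ)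
        = ((k : ℤ) + 1) * (a (rb m) - a i) := by linear_combination e5
    have hb1 := (blk' i).isLt
    have hb2 := (blk' (rb m)).isLt
    have e7 : ((blk' i).val : ℤ) = ((blk' (rb m)).val : ℤ) :=
      int_eq_bounded e6 (by omega) (by omega) (by omega) (by omega)
    refine ⟨Fin.ext (by exact_mod_cast e7), ?_⟩
    have e8 := e6
    rw [e7, sub_self] at e8
    have e9 := (mul_eq_zero.mp e8.symm).resolve_left (by positivity)
    omega
  set σ : Fin (k + 2) → Fin (k + 1) := fun m => blk' (rb m) with hσdef
  have hBsub : ∀ m, B m ⊆ B' (σ m) := by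
    intro m i hi
    have h1 := (hconst m i hi).1
    show i ∈ B' (blk' (rb m))
    rw [← h1]
    exact hblk' i
  have hsurj : ∀ j : Fin (k + 1), ∃ m, σ m = j := by
    intro j
    obtain ⟨i, hi⟩ := hne' j
    obtain ⟨m, hm⟩ := exists_block hBp i
    refine ⟨m, ?_⟩
    by_contra h
    exact Set.disjoint_left.mp (hdis' _ _ h) (hBsub m hm) hi
  set τ : Fin (k + 2) → ℤ := fun m => ((σ m).val : ℤ) + ((k : ℤ) + 1) * a (rb m) with hτdef
  have hdτ : ∀ m, d m = ((τ m : ℤ) : ℝ) / ((k : ℝ) + 1) + t := by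
    intro m
    rw [← hyd m (rb m) (hrb m), hy (rb m)]
    show ((blk' (rb m)).val : ℝ) / ((k : ℝ) + 1) + (a (rb m) : ℝ) + t = _
    simp only [hτdef, hσdef]
    push_cast
    field_simp
  have hτmono : Monotone τ := by
    intro m m' h
    have h1 := hdmono h
    rw [hdτ m, hdτ m'] at h1
    have h2 : ((τ m : ℤ) : ℝ) / ((k : ℝ) + 1) ≤ ((τ m' : ℤ) : ℝ) / ((k : ℝ) + 1) := by linarith
    have h3 := mul_le_mul_of_nonneg_right h2 hKpos.le
    rw [div_mul_cancel₀ _ hKpos.ne', div_mul_cancel₀ _ hKpos.ne'] at h3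
    exact_mod_cast h3
  have hτwrap : τ (Fin.last (k + 1)) ≤ τ 0 + ((k : ℤ) + 1) := by
    have h1 := hdwrap
    rw [hdτ, hdτ] at h1
    have h3 : ((τ (Fin.last (k + 1)) : ℤ) : ℝ) / ((k : ℝ) + 1)
        ≤ ((τ 0 : ℤ) : ℝ) / ((k : ℝ) + 1) + 1 := by linarith
    have h4 := mul_le_mul_of_nonneg_right h3 hKpos.le
    rw [div_mul_cancel₀ _ hKpos.ne', add_mul, div_mul_cancel₀ _ hKpos.ne', one_mul] at h4
    have h5 : ((τ (Fin.last (k + 1)) : ℤ) : ℝ) ≤ ((τ 0 : ℤ) : ℝ) + ((k : ℝ) + 1) := by linarith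
    exact_mod_cast h5
  have hval : ∀ v : ℤ, 1 ≤ v → v ≤ (k : ℤ) → ∃ m, τ m - τ 0 = v := by
    intro v h1 h2
    have hσ0 := (σ 0).isLt
    have hvt : v.toNat ≤ k := by omega
    have hvt2 : (v.toNat : ℤ) = v := by omega
    obtain ⟨j, hj⟩ : ∃ j : Fin (k + 1), ((j.val : ℤ) = ((σ 0).val : ℤ) + v ∨
        (j.val : ℤ) = ((σ 0).val : ℤ) + v - ((k : ℤ) + 1)) := by
      rcases le_or_gt ((σ 0).val + v.toNat) k with hc | hc
      · exact ⟨⟨(σ 0).val + v.toNat, by omega⟩, Or.inl (by push_cast; omega)⟩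
      · exact ⟨⟨(σ 0).val + v.toNat - (k + 1), by omega⟩, Or.inr (by push_cast; omega)⟩
    obtain ⟨m, hmj⟩ := hsurj j
    refine ⟨m, ?_⟩
    have hb1 : 0 ≤ τ m - τ 0 := by
      have := hτmono (Fin.zero_le m)
      omega
    have hb2 : τ m - τ 0 ≤ (k : ℤ) + 1 := by
      have := hτmono (Fin.le_last m)
      omega
    have hσm : ((σ m).val : ℤ) = (j.val : ℤ) := by rw [hmj]
    rcases hj with hj | hj
    · have hz : (τ m - τ 0) - v = ((k : ℤ) + 1) * (a (rb m) - a (rb 0)) := by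
        simp only [hτdef]
        linear_combination hσm + hj
      have := mul_eq_zero_of_bounded (M := k) hz (by omega) (by omega)
      omega
    · have hz : (τ m - τ 0) - v = ((k : ℤ) + 1) * (a (rb m) - a (rb 0) - 1) := by
        simp only [hτdef]
        linear_combination hσm + hj
      have := mul_eq_zero_of_bounded (M := k) hz (by omega) (by omega)
      omega
  obtain ⟨p, hple, hform⟩ := core τ hτmono (by push_cast at hτwrap ⊢; omega) hval
  -- the distinguished rotation
  set s : Fin (k + 2) := ⟨p, by omega⟩ with hsdef
  have hsv : s.val = p := rfl
  set r : Fin (k + 1) := -(σ s) with hrdef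
  -- exact congruence form for σ
  have hF : ∀ m : Fin (k + 2), ((σ m).val : ℤ) = ((σ 0).val : ℤ) + (m.val : ℤ)
      - (if p < m.val then 1 else 0) + ((k : ℤ) + 1) * (a (rb 0) - a (rb m)) := by
    intro m
    have h1 := hform m
    simp only [hτdef] at h1
    push_cast at h1 ⊢
    linear_combination h1
  have e_s : ((σ s).val : ℤ) = ((σ 0).val : ℤ) + (p : ℤ)
      + ((k : ℤ) + 1) * (a (rb 0) - a (rb s)) := by
    have h1 := hF s
    rw [hsv] at h1
    rw [if_neg (by omega)] at h1
    linear_combination h1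
  -- flags
  obtain ⟨sflag, hsflag01, e_r⟩ : ∃ w : ℤ, (w = 0 ∨ w = 1) ∧
      ((σ s).val : ℤ) + (r.val : ℤ) = ((k : ℤ) + 1) * w := by
    have h1 := fin_neg_val (σ s)
    have h2 := (σ s).isLt
    rw [hrdef]
    by_cases h0 : (σ s).val = 0
    · rw [if_pos h0] at h1
      exact ⟨0, Or.inl rfl, by rw [mul_zero]; omega⟩
    · rw [if_neg h0] at h1
      exact ⟨1, Or.inr rfl, by rw [mul_one]; omega⟩
  have hrv := r.isLt
  -- values of s + 1
  have hs1v : p ≤ k → (s + 1).val = p + 1 := by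
    intro hpk
    rw [fin_add_val, Fin.val_one, hsv]
    rw [if_neg (by omega)]
  have hs10 : p = k + 1 → s + 1 = 0 := by
    intro hpk
    apply Fin.ext
    rw [fin_add_val, Fin.val_one, hsv, if_pos (by omega), Fin.val_zero]
    omega
  -- σ agrees on the merged pair
  have hF1 : σ (s + 1) = σ s := by
    rcases le_or_gt p k with hpk | hpk
    · have h1 := hF (s + 1)
      rw [hs1v hpk, if_pos (by omega)] at h1
      push_cast at h1
      exact sigma_eq_aux _ _ ((a (rb 0) - a (rb (s + 1))) - (a (rb 0) - a (rb s)))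
        (by linear_combination h1 - e_s)
    · have hpk1 : p = k + 1 := by omega
      rw [hs10 hpk1]
      exact sigma_eq_aux _ _ (-1 - (a (rb 0) - a (rb s)))
        (by
          have h1 := e_s
          rw [hpk1] at h1
          push_cast at h1 ⊢
          linear_combination -h1)
  -- the key index computation
  have hF2 : ∀ m : Fin (k + 2), m ≠ s → m ≠ s + 1 →
      (σ m + r ≠ 0 ∧ (σ m + r).succ + s = m) := by
    intro m hms hms1
    have hmv := m.isLt
    have hσm := (σ m).isLt
    have hσs := (σ s).isLt
    have hσ0 := (σ 0).isLt
    have hmnep : m.val ≠ p := fun h => hms (Fin.ext (by rw [h, hsv]))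
    have hXlt := (σ m + r).isLt
    have hXn := fin_add_val (σ m) r
    obtain ⟨wflag, hwflag01, e_X⟩ : ∃ w : ℤ, (w = 0 ∨ w = 1) ∧
        (((σ m + r).val : ℤ) = ((σ m).val : ℤ) + (r.val : ℤ) - ((k : ℤ) + 1) * w) := by
      by_cases hw : k + 1 ≤ (σ m).val + r.val
      · rw [if_pos hw] at hXn
        exact ⟨1, Or.inr rfl, by rw [mul_one]; omega⟩
      · rw [if_neg hw] at hXn
        exact ⟨0, Or.inl rfl, by rw [mul_zero]; omega⟩
    rcases Nat.lt_or_ge p m.val with hmp | hmp'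
    · -- p < m.val : X = m.val - 1 - p
      have e_m := hF m
      rw [if_pos hmp] at e_m
      have hz : ((σ m + r).val : ℤ) - ((m.val : ℤ) - 1 - (p : ℤ))
          = ((k : ℤ) + 1) * ((a (rb 0) - a (rb m)) - (a (rb 0) - a (rb s)) - wflag + sflag) := by
        linear_combination e_X + e_m - e_s + e_r
      have hXeq : ((σ m + r).val : ℤ) = (m.val : ℤ) - 1 - (p : ℤ) :=
        int_eq_bounded (M := k) hz (by omega) (by omega) (by omega) (by omega)
      have hpk : p ≤ k := by omega
      have hmps1 : m.val ≠ p + 1 := by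
        intro h
        exact hms1 (Fin.ext (by rw [h, hs1v hpk]))
      constructor
      · intro h0
        have := congrArg Fin.val h0
        rw [Fin.val_zero] at this
        omega
      · apply Fin.ext
        rw [fin_add_val, Fin.val_succ, hsv]
        rw [if_neg (by omega)]
        omega
    · have hmp : m.val < p := by omega
      -- X = m.val + k + 1 - p
      have e_m := hF m
      rw [if_neg (by omega)] at e_m
      have hz : ((σ m + r).val : ℤ) - ((m.val : ℤ) + ((k : ℤ) + 1) - (p : ℤ))
          = ((k : ℤ) + 1) * ((a (rb 0) - a (rb m)) - (a (rb 0) - a (rb s)) - wflag + sflag - 1) := by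
        linear_combination e_X + e_m - e_s + e_r
      have hXeq : ((σ m + r).val : ℤ) = (m.val : ℤ) + ((k : ℤ) + 1) - (p : ℤ) :=
        int_eq_bounded (M := k) hz (by omega) (by omega) (by omega) (by omega)
      constructor
      · intro h0
        have h1 := congrArg Fin.val h0
        rw [Fin.val_zero] at h1
        have hpk1 : p = k + 1 := by omega
        have hm0 : m.val = 0 := by omega
        exact hms1 (Fin.ext (by rw [hm0, hs10 hpk1, Fin.val_zero]))
      · apply Fin.ext
        rw [fin_add_val, Fin.val_succ, hsv]
        rw [if_pos (by omega)]
        omega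
  -- each block of B lands in the right block of the merged rotation
  have hKeyL : ∀ m : Fin (k + 2), B m ⊆ mergeHead n k (fun i => B (i + s)) (σ m + r) := by
    intro m i hi
    by_cases hms : m = s
    · have h0 : σ m + r = 0 := by rw [hms, hrdef]; exact add_neg_cancel (σ s)
      rw [h0]
      show i ∈ if (0 : Fin (k + 1)) = 0 then B (0 + s) ∪ B (1 + s) else _
      rw [if_pos rfl]
      refine Or.inl ?_
      rw [zero_add, ← hms]
      exact hi
    · by_cases hms1 : m = s + 1
      · have h0 : σ m + r = 0 := by rw [hms1, hF1, hrdef]; exact add_neg_cancel (σ s)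
        rw [h0]
        show i ∈ if (0 : Fin (k + 1)) = 0 then B (0 + s) ∪ B (1 + s) else _
        rw [if_pos rfl]
        refine Or.inr ?_
        rw [add_comm 1 s, ← hms1]
        exact hi
      · obtain ⟨hne0, heq⟩ := hF2 m hms hms1
        show i ∈ if σ m + r = 0 then B (0 + s) ∪ B (1 + s) else B ((σ m + r).succ + s)
        rw [if_neg hne0, heq]
        exact hi
  -- inverse index computation
  have hF3 : ∀ j : Fin (k + 1), j + r ≠ 0 → σ ((j + r).succ + s) = j := by
    intro j hj0
    have hms : (j + r).succ + s ≠ s := by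
      intro h
      have h1 : (j + r).succ + s = 0 + s := by rw [h, zero_add]
      exact Fin.succ_ne_zero (j + r) (add_right_cancel h1)
    have hms1 : (j + r).succ + s ≠ s + 1 := by
      intro h
      have h1 : (j + r).succ + s = 1 + s := by rw [h, add_comm s 1]
      have h2 : (j + r).succ = 1 := add_right_cancel h1
      have h3 : (j + r).succ = (0 : Fin (k + 1)).succ := by rw [h2, Fin.succ_zero_eq_one]
      exact hj0 (Fin.succ_injective _ h3)
    obtain ⟨hne0, heq⟩ := hF2 _ hms hms1
    have h5 : (σ ((j + r).succ + s) + r).succ = (j + r).succ := add_right_cancel heq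
    have h6 : σ ((j + r).succ + s) + r = j + r := Fin.succ_injective _ h5
    exact add_right_cancel h6
  have main : ∀ j : Fin (k + 1), B' j = mergeHead n k (fun i => B (i + s)) (j + r) := by
    intro j
    apply Set.Subset.antisymm
    · intro i hij
      obtain ⟨m, hm⟩ := exists_block hBp i
      have hσm : σ m = j := by
        by_contra h
        exact Set.disjoint_left.mp (hdis' _ _ h) (hBsub m hm) hij
      rw [← hσm]
      exact hKeyL m hm
    · intro i hij
      by_cases h0 : j + r = 0
      · have hjσs : j = σ s := by
          have h1 : j + r + -r = 0 + -r := by rw [h0]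
          rw [add_neg_cancel_right, zero_add] at h1
          rw [h1, hrdef, neg_neg]
        rw [h0] at hij
        have hij2 : i ∈ B (0 + s) ∪ B (1 + s) := by
          have : mergeHead n k (fun i => B (i + s)) 0 = B (0 + s) ∪ B (1 + s) := by
            rw [mergeHead, if_pos rfl]
          rwa [this] at hij
        rcases hij2 with hij2 | hij2
        · rw [zero_add] at hij2
          rw [hjσs]
          exact hBsub s hij2
        · rw [add_comm 1 s] at hij2
          have h2 := hBsub (s + 1) hij2
          rw [hF1] at h2
          rwa [hjσs]
      · have hij2 : i ∈ B ((j + r).succ + s) := by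
          have : mergeHead n k (fun i => B (i + s)) (j + r) = B ((j + r).succ + s) := by
            rw [mergeHead, if_neg h0]
          rwa [this] at hij
        have h2 := hBsub _ hij2
        rwa [hF3 j h0] at h2

  refine ⟨s, σ s, fun j => ?_⟩
  have h1 := main (j + σ s)
  rw [hrdef, add_neg_cancel_right] at h1
  exact h1.symm

end Stmt14Aux
/-- for an ordered set partition `B` into `m = k+2` blocks
(`2 ≤ m ≤ n+1`) and an ordered set partition `B'` into `m-1 = k+1` blocks, one has
`F(B') ⊆ F(B)` iff `B'` is cyclically equivalent to an ordered set partition obtained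
from `B` by replacing two cyclically consecutive blocks by their union (merging after
a cyclic rotation of `B`). -/
theorem stmt_14 (n k : ℕ) (hn : 1 ≤ n) (hm : k + 2 ≤ n + 1)
    (B : Fin (k + 2) → Set (Fin (n + 1))) (hB : IsOrdPartition n (k + 1) B)
    (B' : Fin (k + 1) → Set (Fin (n + 1))) (hB' : IsOrdPartition n k B') :
    FB n k B' ⊆ FB n (k + 1) B ↔
      ∃ s : Fin (k + 2), CyclicEquiv n k B' (mergeHead n k (fun i => B (i + s))) := by
  constructor
  · exact fun h => Stmt14Aux.forward hB hB' h
  · rintro ⟨s, r, hr⟩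
    refine Stmt14Aux.backward hB s (-r) (fun j => ?_)
    have h1 := (hr (j + -r)).symm
    rwa [neg_add_cancel_right] at h1

end
end
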